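/- Paraconsistency and nonmonotonicity of four-valued minimal entailment with 𝓘 = {b}: for distinct atoms p and q and Γ = {p, ¬(p∧¬q)}, it holds that (i) Γ ⊭_F q (q is not an F-consequence of Γ), (ii) Γ ⊨^{b}_F q, and (iii) Γ ∪ {¬q} ⊭^{b}_F q; in particular, ⊨^{b}_F is nonmonotonic. -/
import Mathlib


/-- Truth values of the four-valued logic F: f, n, b, t, where in the truth
order f is least, t is greatest, and n, b are incomparable. -/
inductive V4 : Type
  | f | n | b | t
deriving DecidableEq, Repr

namespace V4

/-- Negation: f ↦ t, t ↦ f, and n, b are fixed. -/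
def negv : V4 → V4
  | .f => .t
  | .t => .f
  | .n => .n
  | .b => .b

/-- Conjunction: the meet with respect to the truth order (f least, t
greatest, n and b incomparable, so the meet of n and b is f). -/
def conjv : V4 → V4 → V4
  | .t, y => y
  | .f, _ => .f
  | .n, .t => .n
  | .n, .n => .n
  | .n, .b => .f
  | .n, .f => .f
  | .b, .t => .b
  | .b, .b => .b
  | .b, .n => .f
  | .b, .f => .f

/-- Implication: `x ⊃ y` is `y` if `x` is designated (b or t), and `t`
otherwise. -/
def impv : V4 → V4 → V4
  | .b, y => y
  | .t, y => y
  | .f, _ => .t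
  | .n, _ => .t

end V4

/-- Formulas of the four-valued logic F, with atoms indexed by ℕ, the
constants B and N, negation, conjunction, and implication. -/
inductive FForm : Type
  | atom : ℕ → FForm
  | bb : FForm
  | nn : FForm
  | neg : FForm → FForm
  | conj : FForm → FForm → FForm
  | imp : FForm → FForm → FForm
deriving DecidableEq

namespace FForm

/-- The valuation of F extending an interpretation `I : ℕ → V4`. -/
def val (I : ℕ → V4) : FForm → V4
  | atom p => I p
  | bb => .b
  | nn => .n
  | neg φ => (φ.val I).negv
  | conj φ ψ => (φ.val I).conjv (ψ.val I)
  | imp φ ψ => (φ.val I).impv (ψ.val I)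

/-- `I` is an F-model of `φ`: `v_I(φ)` is designated, i.e. b or t. -/
def IsModel (I : ℕ → V4) (φ : FForm) : Prop := φ.val I = .b ∨ φ.val I = .t

/-- `I` is an F-model of the theory `Γ`. -/
def IsModelSet (I : ℕ → V4) (Γ : Set FForm) : Prop := ∀ φ ∈ Γ, IsModel I φ

end FForm

/-- `Γ ⊨_F Δ`: every F-model of `Γ` is an F-model of some member of `Δ`. -/
def FEntails (Γ Δ : Set FForm) : Prop :=
  ∀ I, FForm.IsModelSet I Γ → ∃ δ ∈ Δ, FForm.IsModel I δ

/-- `I` is an F-model of `Γ` that is most consistent relative to `𝓘 ⊆ V4`: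
no F-model `J` of `Γ` makes a strictly smaller set of atoms take a value
in `𝓘`. -/
def FMostConsistentModel (𝓘 : Set V4) (I : ℕ → V4) (Γ : Set FForm) : Prop :=
  FForm.IsModelSet I Γ ∧
    ¬ ∃ J : ℕ → V4, FForm.IsModelSet J Γ ∧ {p : ℕ | J p ∈ 𝓘} ⊂ {p : ℕ | I p ∈ 𝓘}

/-- `Γ ⊨^𝓘_F Δ`: every F-model of `Γ` most consistent relative to `𝓘` is an
F-model of some member of `Δ`. -/
def FMinEntails (𝓘 : Set V4) (Γ Δ : Set FForm) : Prop :=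
  ∀ I, FMostConsistentModel 𝓘 I Γ → ∃ δ ∈ Δ, FForm.IsModel I δ

/-- Paraconsistency and nonmonotonicity of four-valued minimal entailment with
`𝓘 = {b}`: for distinct atoms `p`, `q` and `Γ = {p, ¬(p ∧ ¬q)}`,
(i) `Γ ⊭_F q`, (ii) `Γ ⊨^{b}_F q`, and (iii) `Γ ∪ {¬q} ⊭^{b}_F q`. -/
theorem F_paraconsistent_nonmonotonic_b (p q : ℕ) (hpq : p ≠ q) :
    ¬ FEntails {FForm.atom p, FForm.neg (FForm.conj (FForm.atom p) (FForm.neg (FForm.atom q)))}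
        {FForm.atom q} ∧
    FMinEntails {V4.b}
        {FForm.atom p, FForm.neg (FForm.conj (FForm.atom p) (FForm.neg (FForm.atom q)))}
        {FForm.atom q} ∧
    ¬ FMinEntails {V4.b}
        ({FForm.atom p, FForm.neg (FForm.conj (FForm.atom p) (FForm.neg (FForm.atom q)))}
          ∪ {FForm.neg (FForm.atom q)})
        {FForm.atom q} := by
  classical
  set Γ : Set FForm :=
    {FForm.atom p, FForm.neg (FForm.conj (FForm.atom p) (FForm.neg (FForm.atom q)))} with hΓ
  -- the canonical model I₀ : p ↦ b, q ↦ f, else t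
  set I₀ : ℕ → V4 := fun r => if r = p then .b else if r = q then .f else .t with hI₀
  have hI₀p : I₀ p = .b := by simp [hI₀]
  have hI₀q : I₀ q = .f := by simp [hI₀, hpq.symm]
  have hI₀mod : FForm.IsModelSet I₀ Γ := by
    intro φ hφ
    rcases hφ with rfl | rfl
    · left; simp [FForm.val, hI₀p]
    · left; simp [FForm.val, hI₀p, hI₀q, V4.negv, V4.conjv]
  have hI₀set : {r : ℕ | I₀ r ∈ ({V4.b} : Set V4)} = {p} := by
    ext r
    simp only [Set.mem_setOf_eq, Set.mem_singleton_iff, hI₀]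
    by_cases hr : r = p <;> by_cases hrq : r = q <;> simp_all
  refine ⟨?_, ?_, ?_⟩
  · -- (i)
    intro hent
    obtain ⟨δ, hδ, hmod⟩ := hent I₀ hI₀mod
    rcases hδ with rfl
    rcases hmod with h | h <;> simp [FForm.val, hI₀q] at h
  · -- (ii)
    intro I ⟨hImod, hmin⟩
    refine ⟨FForm.atom q, rfl, ?_⟩
    by_contra hq
    have h1 : FForm.IsModel I (FForm.atom p) := hImod _ (Or.inl rfl)
    have h2 : FForm.IsModel I
        (FForm.neg (FForm.conj (FForm.atom p) (FForm.neg (FForm.atom q)))) :=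
      hImod _ (Or.inr rfl)
    -- derive I p = b
    have hIpb : I p = .b := by
      simp only [FForm.IsModel, FForm.val] at h1 h2 hq
      push_neg at hq
      cases hp : I p <;> cases hqv : I q <;>
        simp [hp, hqv, V4.negv, V4.conjv] at h1 h2 hq <;> tauto
    -- the better model J
    set J : ℕ → V4 := fun r => if r = p then .t else if r = q then .t else I r with hJ
    have hJp : J p = .t := by simp [hJ]
    have hJq : J q = .t := by simp [hJ, hpq.symm]
    apply hmin
    refine ⟨J, ?_, ?_⟩
    · intro φ hφ
      rcases hφ with rfl | rfl
      · right; simp [FForm.val, hJp]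
      · right; simp [FForm.val, hJp, hJq, V4.negv, V4.conjv]
    · constructor
      · intro r hr
        simp only [Set.mem_setOf_eq] at hr ⊢
        have hrp : r ≠ p := by rintro rfl; rw [hJp] at hr; exact absurd hr (by simp)
        have hrq : r ≠ q := by rintro rfl; rw [hJq] at hr; exact absurd hr (by simp)
        simpa [hJ, hrp, hrq] using hr
      · intro hsub
        have := hsub (show p ∈ {r : ℕ | I r ∈ ({V4.b} : Set V4)} by simp [hIpb])
        simp [hJp] at this
  · -- (iii)
    intro hent
    have hmc : FMostConsistentModel {V4.b} I₀
        ({FForm.atom p, FForm.neg (FForm.conj (FForm.atom p) (FForm.neg (FForm.atom q)))}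
          ∪ {FForm.neg (FForm.atom q)}) := by
      refine ⟨?_, ?_⟩
      · intro φ hφ
        rcases hφ with (rfl | rfl) | rfl
        · left; simp [FForm.val, hI₀p]
        · left; simp [FForm.val, hI₀p, hI₀q, V4.negv, V4.conjv]
        · right; simp [FForm.val, hI₀q, V4.negv]
      · rintro ⟨J, hJmod, hJsub⟩
        rw [hI₀set] at hJsub
        have hJempty : ∀ r, J r ≠ .b := by
          intro r hr
          rcases hJsub with ⟨hsub, hne⟩
          have hrp : r = p := by
            have := hsub (show r ∈ {s : ℕ | J s ∈ ({V4.b} : Set V4)} by simp [hr])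
            simpa using this
          subst hrp
          apply hne
          intro s hs
          simp only [Set.mem_singleton_iff] at hs
          subst hs
          simp [hr]
        have h1 : FForm.IsModel J (FForm.atom p) := hJmod _ (Or.inl (Or.inl rfl))
        have h3 : FForm.IsModel J (FForm.neg (FForm.atom q)) := hJmod _ (Or.inr rfl)
        have h2 : FForm.IsModel J
            (FForm.neg (FForm.conj (FForm.atom p) (FForm.neg (FForm.atom q)))) :=
          hJmod _ (Or.inl (Or.inr rfl))
        have hp := hJempty p
        have hq := hJempty q
        simp only [FForm.IsModel, FForm.val] at h1 h2 h3
        cases hpv : J p <;> cases hqv : J q <;>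
          simp [hpv, hqv, V4.negv, V4.conjv] at h1 h2 h3 hp hq
    obtain ⟨δ, hδ, hmod⟩ := hent I₀ hmc
    rcases hδ with rfl
    rcases hmod with h | h <;> simp [FForm.val, hI₀q] at h
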